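/- arXiv:2502.15428 — 3 statements merged into one kernel-verified Lean document; each statement's English description precedes it below -/
import Mathlib

section
/- In a finite simple graph G where every edge is incident to the faulty set F (|F| = f), with maximal matching M and triangle set T (unmatched vertices forming a triangle with an edge of M) and crash set C ⊆ F disjoint from vertices of M and T, the quantity |C| + |M| + |T| is at most f. -/
/-- With every edge incident to the faulty set `F` (`|F| = f`), `M` a maximal
matching, `T` the triangle set (each element associated to a distinct edge of `M`),
and `C ⊆ F` a crash set disjoint from the vertices of `M` and from `T`,
one has `|C| + |M| + |T| ≤ f`. -/
theorem stmt8 {V : Type*} [Fintype V] [DecidableEq V] (G : SimpleGraph V)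
    (F : Finset V) (f : ℕ) (hF : F.card = f)
    (hcover : ∀ e ∈ G.edgeSet, ∃ w ∈ F, w ∈ e)
    (M : Finset (Sym2 V))
    (hMedges : ∀ e ∈ M, e ∈ G.edgeSet)
    (hMdisj : ∀ e ∈ M, ∀ e' ∈ M, e ≠ e' → ∀ w : V, w ∈ e → w ∉ e')
    (hMmax : ∀ e ∈ G.edgeSet, e ∉ M → ∃ e' ∈ M, ∃ w : V, w ∈ e ∧ w ∈ e')
    (T : Finset V) (et : V → Sym2 V)
    (hTunmatched : ∀ v ∈ T, ∀ e ∈ M, v ∉ e)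
    (hTtri : ∀ v ∈ T, et v ∈ M ∧ ∃ a b : V, et v = s(a, b) ∧ G.Adj v a ∧ G.Adj v b)
    (hTinj : ∀ v ∈ T, ∀ w ∈ T, et v = et w → v = w)
    (C : Finset V) (hCF : C ⊆ F)
    (hCM : ∀ v ∈ C, ∀ e ∈ M, v ∉ e)
    (hCT : ∀ v ∈ C, v ∉ T) :
    C.card + M.card + T.card ≤ f := by
  classical
  -- choose a faulty endpoint W e for each matching edge
  have hWex : ∀ e : Sym2 V, ∃ w, e ∈ M → w ∈ F ∧ w ∈ e := by
    intro e
    by_cases he : e ∈ M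
    · obtain ⟨w, hwF, hwe⟩ := hcover e (hMedges e he)
      exact ⟨w, fun _ => ⟨hwF, hwe⟩⟩
    · exact ⟨(Quot.out e).1, fun h => absurd h he⟩
  choose W hW using hWex
  have hWF : ∀ e ∈ M, W e ∈ F := fun e he => (hW e he).1
  have hWe : ∀ e ∈ M, W e ∈ e := fun e he => (hW e he).2
  -- choose the other endpoint O e of each matching edge
  have hOex : ∀ e : Sym2 V, ∃ o, e ∈ M → o ∈ e ∧ o ≠ W e := by
    intro e
    by_cases he : e ∈ M
    · induction e using Sym2.ind with
      | _ u v =>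
        have hadj : G.Adj u v := (SimpleGraph.mem_edgeSet _).mp (hMedges _ he)
        have huv : u ≠ v := hadj.ne
        rcases Sym2.mem_iff.mp (hWe _ he) with h | h
        · exact ⟨v, fun _ => ⟨Sym2.mem_mk_right u v, by rw [h]; exact huv.symm⟩⟩
        · exact ⟨u, fun _ => ⟨Sym2.mem_mk_left u v, by rw [h]; exact huv⟩⟩
    · exact ⟨(Quot.out e).1, fun h => absurd h he⟩
  choose O hO using hOex
  have hOe : ∀ e ∈ M, O e ∈ e := fun e he => (hO e he).1
  have hOne : ∀ e ∈ M, O e ≠ W e := fun e he => (hO e he).2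
  -- if t ∈ T is not faulty, all vertices of et t are faulty
  have hbothF : ∀ t ∈ T, t ∉ F → ∀ x ∈ et t, x ∈ F := by
    intro t ht htF x hx
    obtain ⟨hetM, a, b, hab, hta, htb⟩ := hTtri t ht
    rw [hab] at hx
    rcases Sym2.mem_iff.mp hx with rfl | rfl
    · obtain ⟨w, hwF, hw⟩ := hcover s(t, x) ((SimpleGraph.mem_edgeSet _).mpr hta)
      rcases Sym2.mem_iff.mp hw with rfl | rfl
      · exact absurd hwF htF
      · exact hwF
    · obtain ⟨w, hwF, hw⟩ := hcover s(t, x) ((SimpleGraph.mem_edgeSet _).mpr htb)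
      rcases Sym2.mem_iff.mp hw with rfl | rfl
      · exact absurd hwF htF
      · exact hwF
  -- the map on T
  set g : V → V := fun t => if t ∈ F then t else O (et t) with hg
  have hgF : ∀ t ∈ T, g t ∈ F := by
    intro t ht
    by_cases htF : t ∈ F
    · simp [hg, htF]
    · simp only [hg, htF, if_false]
      exact hbothF t ht htF _ (hOe _ (hTtri t ht).1)
  -- the union set
  have hsub : C ∪ M.image W ∪ T.image g ⊆ F := by
    intro x hx
    rcases Finset.mem_union.mp hx with hx | hx
    · rcases Finset.mem_union.mp hx with hx | hx
      · exact hCF hx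
      · obtain ⟨e, he, rfl⟩ := Finset.mem_image.mp hx
        exact hWF e he
    · obtain ⟨t, ht, rfl⟩ := Finset.mem_image.mp hx
      exact hgF t ht
  -- injectivity of W on M
  have hWinj : Set.InjOn W M := by
    intro e he e' he' heq
    by_contra hne
    exact hMdisj e he e' he' hne (W e) (hWe e he) (heq ▸ hWe e' he')
  -- injectivity of g on T
  have hginj : Set.InjOn g T := by
    intro t ht t' ht' heq
    by_cases htF : t ∈ F <;> by_cases ht'F : t' ∈ F
    · simpa [hg, htF, ht'F] using heq
    · exfalso
      simp only [hg, htF, ht'F, if_true, if_false] at heq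
      exact hTunmatched t ht (et t') (hTtri t' ht').1 (heq ▸ hOe _ (hTtri t' ht').1)
    · exfalso
      simp only [hg, htF, ht'F, if_true, if_false] at heq
      exact hTunmatched t' ht' (et t) (hTtri t ht).1 (heq ▸ hOe _ (hTtri t ht).1)
    · simp only [hg, htF, ht'F, if_false] at heq
      by_cases hee : et t = et t'
      · exact hTinj t ht t' ht' hee
      · exact absurd (heq ▸ hOe _ (hTtri t ht).1)
          (hMdisj (et t') (hTtri t' ht').1 (et t) (hTtri t ht).1 (Ne.symm hee)
            (O (et t')) (hOe _ (hTtri t' ht').1))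
  -- disjointness
  have hd1 : Disjoint C (M.image W) := by
    rw [Finset.disjoint_left]
    intro v hv hv'
    obtain ⟨e, he, heq⟩ := Finset.mem_image.mp hv'
    exact hCM v hv e he (heq ▸ hWe e he)
  have hd2 : Disjoint (C ∪ M.image W) (T.image g) := by
    rw [Finset.disjoint_left]
    intro v hv hv'
    obtain ⟨t, ht, heq⟩ := Finset.mem_image.mp hv'
    rcases Finset.mem_union.mp hv with hv | hv
    · by_cases htF : t ∈ F
      · simp only [hg, htF, if_true] at heq
        exact hCT v hv (heq ▸ ht)
      · simp only [hg, htF, if_false] at heq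
        exact hCM v hv (et t) (hTtri t ht).1 (heq ▸ hOe _ (hTtri t ht).1)
    · obtain ⟨e, he, heq'⟩ := Finset.mem_image.mp hv
      by_cases htF : t ∈ F
      · simp only [hg, htF, if_true] at heq
        exact hTunmatched t ht e he (heq ▸ heq'.symm ▸ hWe e he)
      · simp only [hg, htF, if_false] at heq
        by_cases hee : e = et t
        · subst hee
          exact hOne _ (hTtri t ht).1 (heq.trans heq'.symm)
        · exact hMdisj e he (et t) (hTtri t ht).1 hee (W e) (hWe e he)
            (heq' ▸ heq ▸ hOe _ (hTtri t ht).1)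
  -- conclude
  calc C.card + M.card + T.card
      = C.card + (M.image W).card + (T.image g).card := by
        rw [Finset.card_image_of_injOn hWinj, Finset.card_image_of_injOn hginj]
    _ = (C ∪ M.image W ∪ T.image g).card := by
        rw [Finset.card_union_of_disjoint hd2, Finset.card_union_of_disjoint hd1]
    _ ≤ F.card := Finset.card_le_card hsub
    _ = f := hF
end

section
/- In a three-level tree where the root waits for aggregates from intermediate nodes accounting for at least n − f + u votes (including the root's own vote), if the root does not obtain this many votes then either some intermediate node fails to deliver a valid aggregate (yielding one suspicion between internal nodes), or at least u + 1 leaf votes are missing (and each missing leaf is suspected by its parent), i.e., at least u + 1 leaves get suspected. -/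
/-- The root waits for votes from a set `S` of nodes (the chosen subtrees) accounting
for at least `n - f + u` votes.  If fewer than `n - f` votes are obtained, then either
some internal node is missing (yielding one suspicion between internal nodes), or at
least `u + 1` leaves are missing and each is suspected by its parent. -/
theorem stmt12 {V : Type*} [Fintype V] [DecidableEq V]
    (n f u : ℕ) (hfn : f ≤ n)
    (S Votes Internal : Finset V)
    (hS : n - f + u ≤ S.card) (hVS : Votes ⊆ S)
    (hfail : Votes.card < n - f) :
    (∃ v ∈ S \ Votes, v ∈ Internal) ∨
      u + 1 ≤ ((S \ Votes).filter (fun v => v ∉ Internal)).card := by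
  by_cases h : ∃ v ∈ S \ Votes, v ∈ Internal
  · exact Or.inl h
  · right
    push_neg at h
    have hfilter : (S \ Votes).filter (fun v => v ∉ Internal) = S \ Votes := by
      apply Finset.filter_true_of_mem
      intro v hv
      exact h v hv
    rw [hfilter, Finset.card_sdiff_of_subset hVS]
    omega
end

section
/- If every maximal matching edge of M contains at least one faulty vertex, every vertex of the crash set C is faulty, and every triangle vertex t ∈ T that is non-faulty forces both endpoints of its triangle's matching edge to be faulty (edges of M being pairwise disjoint and each matching edge associated to at most one triangle vertex), then the number of distinct faulty vertices identified is at least |C| + |M| + |T|; hence if |C| + |M| + |T| = t equals the true number of faults, all faulty replicas are excluded from the candidate set. -/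
/-- Counting faults: each edge of the matching `M` contains a faulty vertex, each
crashed vertex in `C` is faulty, and each triangle vertex `t ∈ T` that is non-faulty
forces both endpoints of its (distinct) matching edge to be faulty.  Then at least
`|C| + |M| + |T|` distinct faulty vertices exist; if this equals the number `t` of
true faults, every faulty replica is excluded from the candidate set. -/
theorem stmt14 {V : Type*} [Fintype V] [DecidableEq V]
    (F : Finset V) (t : ℕ) (hF : F.card = t)
    (M : Finset (Sym2 V))
    (hMloop : ∀ e ∈ M, ¬ e.IsDiag)
    (hMdisj : ∀ e ∈ M, ∀ e' ∈ M, e ≠ e' → ∀ w : V, w ∈ e → w ∉ e')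
    (hMF : ∀ e ∈ M, ∃ w ∈ F, w ∈ e)
    (T : Finset V) (et : V → Sym2 V)
    (hTunmatched : ∀ v ∈ T, ∀ e ∈ M, v ∉ e)
    (hTe : ∀ v ∈ T, et v ∈ M)
    (hTinj : ∀ v ∈ T, ∀ w ∈ T, et v = et w → v = w)
    (hTforce : ∀ v ∈ T, v ∉ F → ∀ w : V, w ∈ et v → w ∈ F)
    (C : Finset V) (hCF : C ⊆ F)
    (hCM : ∀ v ∈ C, ∀ e ∈ M, v ∉ e)
    (hCT : ∀ v ∈ C, v ∉ T) :
    C.card + M.card + T.card ≤ t ∧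
      (C.card + M.card + T.card = t →
        ∀ v ∈ F, v ∈ C ∨ (∃ e ∈ M, v ∈ e) ∨ v ∈ T) := by
  classical
  set A : Sym2 V → Finset V := fun e => F.filter (fun w => w ∈ e) with hA
  have hAsub : ∀ e, A e ⊆ F := fun e => Finset.filter_subset _ _
  have hA1 : ∀ e ∈ M, 1 ≤ (A e).card := by
    intro e he
    obtain ⟨w, hwF, hwe⟩ := hMF e he
    exact Finset.card_pos.mpr ⟨w, by simp [hA, hwF, hwe]⟩
  have key2 : ∀ e : Sym2 V, ¬ e.IsDiag → (∀ w ∈ e, w ∈ F) → 2 ≤ (A e).card := by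
    intro e
    induction e using Sym2.ind with
    | _ a b =>
      intro hd hall
      have hab : a ≠ b := by
        intro h; exact hd (by simp [h])
      have hsub : ({a, b} : Finset V) ⊆ A s(a, b) := by
        intro x hx
        simp only [Finset.mem_insert, Finset.mem_singleton] at hx
        rcases hx with rfl | rfl
        · exact Finset.mem_filter.mpr ⟨hall _ (Sym2.mem_mk_left _ _), Sym2.mem_mk_left _ _⟩
        · exact Finset.mem_filter.mpr ⟨hall _ (Sym2.mem_mk_right _ _), Sym2.mem_mk_right _ _⟩
      calc 2 = ({a, b} : Finset V).card := (Finset.card_pair hab).symm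
        _ ≤ _ := Finset.card_le_card hsub
  -- the set of matching edges of non-faulty triangle vertices
  set M' : Finset (Sym2 V) := (T.filter (fun v => v ∉ F)).image et with hM'
  have hM'sub : M' ⊆ M := by
    intro e he
    simp only [hM', Finset.mem_image, Finset.mem_filter] at he
    obtain ⟨v, ⟨hvT, _⟩, rfl⟩ := he
    exact hTe v hvT
  have hM'card : M'.card = (T.filter (fun v => v ∉ F)).card := by
    apply Finset.card_image_of_injOn
    intro x hx y hy hxy
    exact hTinj x (Finset.mem_filter.mp hx).1 y (Finset.mem_filter.mp hy).1 hxy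
  have hA2 : ∀ e ∈ M', 2 ≤ (A e).card := by
    intro e he
    simp only [hM', Finset.mem_image, Finset.mem_filter] at he
    obtain ⟨v, ⟨hvT, hvF⟩, rfl⟩ := he
    exact key2 _ (hMloop _ (hTe v hvT)) (hTforce v hvT hvF)
  -- sum bound
  have hsum : M.card + M'.card ≤ ∑ e ∈ M, (A e).card := by
    have h1 : ∑ e ∈ M \ M', (A e).card + ∑ e ∈ M', (A e).card = ∑ e ∈ M, (A e).card :=
      Finset.sum_sdiff hM'sub
    have h2 : (M \ M').card ≤ ∑ e ∈ M \ M', (A e).card := by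
      calc (M \ M').card = ∑ _e ∈ M \ M', 1 := by simp
        _ ≤ _ := Finset.sum_le_sum (fun e he => hA1 e (Finset.mem_sdiff.mp he).1)
    have h3 : 2 * M'.card ≤ ∑ e ∈ M', (A e).card := by
      calc 2 * M'.card = ∑ _e ∈ M', 2 := by simp [mul_comm]
        _ ≤ _ := Finset.sum_le_sum hA2
    have h4 : (M \ M').card = M.card - M'.card := Finset.card_sdiff_of_subset hM'sub
    have h5 : M'.card ≤ M.card := Finset.card_le_card hM'sub
    omega
  -- the witness set
  set B : Finset V := M.biUnion A with hB
  have hBdisj : ∀ x ∈ M, ∀ y ∈ M, x ≠ y → Disjoint (A x) (A y) := by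
    intro x hx y hy hxy
    rw [Finset.disjoint_left]
    intro w hwx hwy
    simp only [hA, Finset.mem_filter] at hwx hwy
    exact hMdisj x hx y hy hxy w hwx.2 hwy.2
  have hBcard : B.card = ∑ e ∈ M, (A e).card := Finset.card_biUnion hBdisj
  have hmemB : ∀ w, w ∈ B ↔ ∃ e ∈ M, w ∈ F ∧ w ∈ e := by
    intro w; simp [hB, hA, Finset.mem_biUnion, Finset.mem_filter, and_comm]
  set S : Finset V := (C ∪ T.filter (fun v => v ∈ F)) ∪ B with hS
  have hSsub : S ⊆ F := by
    intro v hv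
    simp only [hS, Finset.mem_union, Finset.mem_filter] at hv
    rcases hv with (hv | hv) | hv
    · exact hCF hv
    · exact hv.2
    · exact ((hmemB v).mp hv).choose_spec.2.1
  have hd1 : Disjoint C (T.filter (fun v => v ∈ F)) := by
    rw [Finset.disjoint_left]
    intro v hvC hvT
    exact hCT v hvC (Finset.mem_filter.mp hvT).1
  have hd2 : Disjoint (C ∪ T.filter (fun v => v ∈ F)) B := by
    rw [Finset.disjoint_left]
    intro v hv hvB
    obtain ⟨e, heM, _, hve⟩ := (hmemB v).mp hvB
    rcases Finset.mem_union.mp hv with hvC | hvT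
    · exact hCM v hvC e heM hve
    · exact hTunmatched v (Finset.mem_filter.mp hvT).1 e heM hve
  have hScard : S.card = C.card + (T.filter (fun v => v ∈ F)).card + B.card := by
    rw [hS, Finset.card_union_of_disjoint hd2, Finset.card_union_of_disjoint hd1]
  have hTsplit : (T.filter (fun v => v ∈ F)).card + (T.filter (fun v => v ∉ F)).card = T.card :=
    Finset.card_filter_add_card_filter_not (p := fun v => v ∈ F)
  have hmain : C.card + M.card + T.card ≤ S.card := by
    rw [hScard, hBcard]; omega
  have hSF : S.card ≤ t := hF ▸ Finset.card_le_card hSsub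
  refine ⟨le_trans hmain hSF, ?_⟩
  intro heq v hvF
  have hSeq : S = F := Finset.eq_of_subset_of_card_le hSsub (by omega)
  have hvS : v ∈ S := hSeq ▸ hvF
  simp only [hS, Finset.mem_union, Finset.mem_filter] at hvS
  rcases hvS with (hv | hv) | hv
  · exact Or.inl hv
  · exact Or.inr (Or.inr hv.1)
  · obtain ⟨e, heM, _, hve⟩ := (hmemB v).mp hv
    exact Or.inr (Or.inl ⟨e, heM, hve⟩)
end
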